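/- arXiv:1410.4378 — 5 statements merged into one kernel-verified Lean document; each statement's English description precedes it below -/
import Mathlib

section
/- Let U ⊆ H be a subset and set −H∖−U = {−m : m ∈ H, m ∉ U} ⊆ ℤ^r. Let C = {(f(P))_{P ∈ (𝔽_q^*)^r} : f ∈ 𝔽_q<U>} ⊆ 𝔽_q^{(q−1)^r} be the toric code obtained by evaluating at all torus points. Then the orthogonal complement of C with respect to the standard bilinear form (a ⋆ b = Σ_l a_l b_l) is exactly {(g(P))_{P ∈ (𝔽_q^*)^r} : g ∈ 𝔽_q<−H∖−U>}; i.e., the dual code of C is the toric code of −H∖−U. -/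
open scoped BigOperators

/-- Evaluation of a Laurent polynomial (given by its finitely supported coefficient
function on exponent vectors in `ℤ^r`) at a point of the torus `(Kˣ)^r`. -/
noncomputable def laurentEval {K : Type} [Field K] {r : ℕ}
    (f : (Fin r → ℤ) →₀ K) (P : Fin r → Kˣ) : K :=
  ∑ u ∈ f.support, f u * ∏ i, ((P i ^ u i : Kˣ) : K)

/-- The hypercube `H = {0, 1, …, q-2}^r ⊂ ℤ^r`. -/
def Hset (q r : ℕ) : Set (Fin r → ℤ) := {m | ∀ i, 0 ≤ m i ∧ m i ≤ (q : ℤ) - 2}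

section Aux

variable {K : Type} [Field K] [Fintype K] [DecidableEq K]

lemma sum_units_zpow (a : ℤ) :
    ∑ x : Kˣ, ((x ^ a : Kˣ) : K) = if ((Fintype.card K : ℤ) - 1) ∣ a then -1 else 0 := by
  have h2 : 2 ≤ Fintype.card K := Fintype.one_lt_card
  set d : ℕ := Fintype.card K - 1 with hd
  have hd0 : 0 < d := by omega
  have hcast : ((Fintype.card K : ℤ) - 1) = (d : ℤ) := by
    rw [hd]; push_cast [Nat.cast_sub (by omega : 1 ≤ Fintype.card K)]; ring
  set n : ℕ := (a % (d : ℤ)).toNat with hn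
  have hdne : (d : ℤ) ≠ 0 := by exact_mod_cast hd0.ne'
  have hmod0 : 0 ≤ a % (d : ℤ) := Int.emod_nonneg a hdne
  have hmodlt : a % (d : ℤ) < (d : ℤ) := Int.emod_lt_of_pos a (by exact_mod_cast hd0)
  have hx : ∀ x : Kˣ, x ^ a = x ^ n := by
    intro x
    have h1 : x ^ ((a % (Fintype.card Kˣ : ℤ))) = x ^ a := zpow_mod_card x a
    rw [Fintype.card_units, ← hd] at h1
    rw [← h1, ← zpow_natCast, hn, Int.toNat_of_nonneg hmod0]
  have hdvd : (d ∣ n) ↔ (((Fintype.card K : ℤ) - 1) ∣ a) := by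
    rw [hcast]
    constructor
    · intro h
      have hnlt : n < d := by omega
      have hn0 : n = 0 := by
        rcases Nat.eq_zero_or_pos n with h0 | h0
        · exact h0
        · exact absurd (Nat.le_of_dvd h0 h) (by omega)
      have : a % (d : ℤ) = 0 := by omega
      exact Int.dvd_of_emod_eq_zero this
    · intro h
      have : a % (d : ℤ) = 0 := Int.emod_eq_zero_of_dvd h
      have : n = 0 := by omega
      simp [this]
  calc ∑ x : Kˣ, ((x ^ a : Kˣ) : K) = ∑ x : Kˣ, ((x : K) ^ n) := by
        refine Finset.sum_congr rfl fun x _ => ?_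
        rw [hx x]; push_cast; ring
    _ = if Fintype.card K - 1 ∣ n then -1 else 0 := FiniteField.sum_pow_units K n
    _ = if ((Fintype.card K : ℤ) - 1) ∣ a then -1 else 0 := by
        rw [← hd]
        by_cases h : d ∣ n
        · rw [if_pos h, if_pos (hdvd.mp h)]
        · rw [if_neg h, if_neg fun hh => h (hdvd.mpr hh)]

lemma char_sum {r : ℕ} (m : Fin r → ℤ) :
    ∑ P : Fin r → Kˣ, ∏ i, ((P i ^ m i : Kˣ) : K) =
      if ∀ i, ((Fintype.card K : ℤ) - 1) ∣ m i then (-1 : K) ^ r else 0 := by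
  have hfac : ∑ P : Fin r → Kˣ, ∏ i, ((P i ^ m i : Kˣ) : K)
      = ∏ i, ∑ x : Kˣ, ((x ^ m i : Kˣ) : K) := by
    rw [← Fintype.piFinset_univ]
    exact (Finset.prod_univ_sum (fun _ : Fin r => (Finset.univ : Finset Kˣ))
      (fun i x => ((x ^ m i : Kˣ) : K))).symm
  rw [hfac]
  by_cases h : ∀ i, ((Fintype.card K : ℤ) - 1) ∣ m i
  · rw [if_pos h]
    calc ∏ i, ∑ x : Kˣ, ((x ^ m i : Kˣ) : K) = ∏ _i : Fin r, (-1 : K) :=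
          Finset.prod_congr rfl fun i _ => by rw [sum_units_zpow, if_pos (h i)]
      _ = (-1 : K) ^ r := by simp
  · rw [if_neg h]
    push_neg at h
    obtain ⟨i, hi⟩ := h
    exact Finset.prod_eq_zero (Finset.mem_univ i) (by rw [sum_units_zpow, if_neg hi])

lemma sum_Icc_zpow (y : Kˣ) :
    ∑ k ∈ Finset.Icc (0 : ℤ) ((Fintype.card K : ℤ) - 2), ((y ^ k : Kˣ) : K) =
      if y = 1 then -1 else 0 := by
  have h2 : 2 ≤ Fintype.card K := Fintype.one_lt_card
  have himg : Finset.Icc (0 : ℤ) ((Fintype.card K : ℤ) - 2)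
      = (Finset.range (Fintype.card K - 1)).image (fun n : ℕ => (n : ℤ)) := by
    ext x
    simp only [Finset.mem_Icc, Finset.mem_image, Finset.mem_range]
    constructor
    · rintro ⟨h0, h1⟩; exact ⟨x.toNat, by omega, by omega⟩
    · rintro ⟨n, hn, rfl⟩; omega
  rw [himg, Finset.sum_image (by intro a _ b _ h; exact Nat.cast_injective h)]
  have hpow : ∀ n : ℕ, ((y ^ (n : ℤ) : Kˣ) : K) = (y : K) ^ n := by
    intro n; rw [zpow_natCast]; push_cast; ring
  simp only [hpow]
  by_cases hy : y = 1
  · subst hy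
    rw [if_pos rfl]
    simp only [Units.val_one, one_pow]
    rw [Finset.sum_const, Finset.card_range, nsmul_eq_mul, mul_one]
    rw [Nat.cast_sub (by omega : 1 ≤ Fintype.card K), FiniteField.cast_card_eq_zero]
    ring
  · rw [if_neg hy]
    have hy' : (y : K) ≠ 1 := fun h => hy (Units.ext h)
    rw [geom_sum_eq hy']
    have h1 : (y : K) ^ (Fintype.card K - 1) = 1 :=
      FiniteField.pow_card_sub_one_eq_one (y : K) (Units.ne_zero y)
    rw [h1, sub_self, zero_div]

lemma laurentEval_subset {r : ℕ} (f : (Fin r → ℤ) →₀ K) {S : Finset (Fin r → ℤ)}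
    (hS : f.support ⊆ S) (P : Fin r → Kˣ) :
    laurentEval f P = ∑ u ∈ S, f u * ∏ i, ((P i ^ u i : Kˣ) : K) :=
  Finset.sum_subset hS fun u _ hu => by
    rw [Finsupp.notMem_support_iff.mp hu, zero_mul]

lemma laurentEval_single {r : ℕ} (m : Fin r → ℤ) (P : Fin r → Kˣ) :
    laurentEval (Finsupp.single m (1 : K)) P = ∏ i, ((P i ^ m i : Kˣ) : K) := by
  unfold laurentEval
  rw [Finsupp.support_single_ne_zero m one_ne_zero, Finset.sum_singleton,
    Finsupp.single_eq_same, one_mul]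

lemma eq_of_dvd_sub {c : ℕ} (hc : 2 ≤ c) {a b : ℤ} (ha0 : 0 ≤ a) (ha : a ≤ (c : ℤ) - 2)
    (hb0 : 0 ≤ b) (hb : b ≤ (c : ℤ) - 2) (h : ((c : ℤ) - 1) ∣ a - b) : a = b := by
  have := Int.eq_zero_of_abs_lt_dvd h (by rw [abs_lt]; omega)
  omega

end Aux

/-- the orthogonal complement (w.r.t. the standard bilinear form on
functions on the torus) of the toric code of `U ⊆ H` is exactly the toric code of
`−H∖−U`, i.e. the dual code of `C` is the toric code of `−H∖−U`. -/
theorem stmt5 {K : Type} [Field K] [Fintype K] [DecidableEq K]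
    (q : ℕ) (hq : Fintype.card K = q) {r : ℕ}
    (U : Set (Fin r → ℤ)) (hU : U ⊆ Hset q r) :
    {e : (Fin r → Kˣ) → K | ∀ f : (Fin r → ℤ) →₀ K, ↑f.support ⊆ U →
        ∑ P : Fin r → Kˣ, e P * laurentEval f P = 0} =
      {e : (Fin r → Kˣ) → K | ∃ g : (Fin r → ℤ) →₀ K,
        ↑g.support ⊆ (fun m => -m) '' (Hset q r \ U) ∧
        e = fun P => laurentEval g P} := by
  subst hq
  classical
  have h2 : 2 ≤ Fintype.card K := Fintype.one_lt_card
  have hsq : ((-1 : K) ^ r) * ((-1 : K) ^ r) = 1 := by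
    rw [← pow_add]; exact Even.neg_one_pow ⟨r, rfl⟩
  ext e
  simp only [Set.mem_setOf_eq]
  constructor
  · intro he
    set Hfin : Finset (Fin r → ℤ) :=
      Fintype.piFinset (fun _ : Fin r => Finset.Icc (0 : ℤ) ((Fintype.card K : ℤ) - 2))
      with hHfin
    have hHmem : ∀ m : Fin r → ℤ, m ∈ Hfin ↔ m ∈ Hset (Fintype.card K) r := by
      intro m
      simp [hHfin, Fintype.mem_piFinset, Finset.mem_Icc, Hset, Set.mem_setOf_eq]
    set c : (Fin r → ℤ) → K :=
      fun m => (-1 : K) ^ r * ∑ P : Fin r → Kˣ, e P * ∏ i, ((P i ^ m i : Kˣ) : K) with hc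
    have hcU : ∀ m ∈ U, c m = 0 := by
      intro m hm
      have hsupp : ↑(Finsupp.single m (1 : K)).support ⊆ U := by
        intro x hx
        have hx' : x ∈ ({m} : Finset (Fin r → ℤ)) := Finsupp.support_single_subset hx
        rw [Finset.mem_singleton] at hx'
        subst hx'; exact hm
      have h0 := he (Finsupp.single m 1) hsupp
      simp only [laurentEval_single] at h0
      rw [hc]
      simp only [h0, mul_zero]
    refine ⟨Finsupp.onFinset (Hfin.image (fun m => -m))
        (fun v => if -v ∈ Hfin then c (-v) else 0)
        (fun v hv => by
          by_cases h : -v ∈ Hfin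
          · exact Finset.mem_image.mpr ⟨-v, h, neg_neg v⟩
          · simp [h] at hv), ?_, ?_⟩
    · intro v hv
      have hv' : (if -v ∈ Hfin then c (-v) else 0) ≠ 0 := Finsupp.mem_support_iff.mp hv
      by_cases h : -v ∈ Hfin
      · refine ⟨-v, ⟨(hHmem _).mp h, ?_⟩, neg_neg v⟩
        intro hmem
        rw [if_pos h, hcU _ hmem] at hv'
        exact hv' rfl
      · rw [if_neg h] at hv'
        exact absurd rfl hv'
    · funext Q
      set g : (Fin r → ℤ) →₀ K := Finsupp.onFinset (Hfin.image (fun m => -m))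
        (fun v => if -v ∈ Hfin then c (-v) else 0)
        (fun v hv => by
          by_cases h : -v ∈ Hfin
          · exact Finset.mem_image.mpr ⟨-v, h, neg_neg v⟩
          · simp [h] at hv) with hg
      have hgapp : ∀ v, g v = if -v ∈ Hfin then c (-v) else 0 := fun v => rfl
      have hsupp : g.support ⊆ Hfin.image (fun m => -m) := Finsupp.support_onFinset_subset
      have hinj : ∀ x ∈ Hfin, ∀ y ∈ Hfin, -x = -y → x = y := by
        intro x _ y _ h; exact neg_injective h
      have key : laurentEval g Q = e Q := by
        rw [laurentEval_subset g hsupp Q, Finset.sum_image hinj]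
        have step1 : ∀ m ∈ Hfin,
            g (-m) * ∏ i, ((Q i ^ (-m) i : Kˣ) : K)
              = c m * ∏ i, ((Q i ^ (-(m i)) : Kˣ) : K) := by
          intro m hm
          rw [hgapp, neg_neg, if_pos hm]
          rfl
        rw [Finset.sum_congr rfl step1]
        calc ∑ m ∈ Hfin, c m * ∏ i, ((Q i ^ (-(m i)) : Kˣ) : K)
            = ∑ m ∈ Hfin, ∑ P : Fin r → Kˣ,
                (-1 : K) ^ r * e P * ∏ i, (((P i * (Q i)⁻¹) ^ m i : Kˣ) : K) := by
              refine Finset.sum_congr rfl fun m _ => ?_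
              rw [hc, mul_assoc, Finset.sum_mul, Finset.mul_sum]
              refine Finset.sum_congr rfl fun P _ => ?_
              have hprod : ∏ i, (((P i * (Q i)⁻¹) ^ m i : Kˣ) : K)
                  = (∏ i, ((P i ^ m i : Kˣ) : K)) * ∏ i, ((Q i ^ (-(m i)) : Kˣ) : K) := by
                rw [← Finset.prod_mul_distrib]
                refine Finset.prod_congr rfl fun i _ => ?_
                rw [← Units.val_mul, mul_zpow, zpow_neg, inv_zpow]
              rw [hprod]; ring
          _ = ∑ P : Fin r → Kˣ, (-1 : K) ^ r * e P *
                ∑ m ∈ Hfin, ∏ i, (((P i * (Q i)⁻¹) ^ m i : Kˣ) : K) := by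
              rw [Finset.sum_comm]
              exact Finset.sum_congr rfl fun P _ => (Finset.mul_sum _ _ _).symm
          _ = ∑ P : Fin r → Kˣ, (-1 : K) ^ r * e P *
                (if P = Q then (-1 : K) ^ r else 0) := by
              refine Finset.sum_congr rfl fun P _ => ?_
              congr 1
              rw [hHfin, ← Finset.prod_univ_sum
                (fun _ : Fin r => Finset.Icc (0 : ℤ) ((Fintype.card K : ℤ) - 2))
                (fun i k => (((P i * (Q i)⁻¹) ^ k : Kˣ) : K))]
              by_cases hPQ : P = Q
              · subst hPQ
                rw [if_pos rfl]
                calc ∏ i, ∑ k ∈ Finset.Icc (0 : ℤ) ((Fintype.card K : ℤ) - 2),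
                      (((P i * (P i)⁻¹) ^ k : Kˣ) : K) = ∏ _i : Fin r, (-1 : K) :=
                      Finset.prod_congr rfl fun i _ => by
                        rw [sum_Icc_zpow, if_pos (mul_inv_cancel (P i))]
                  _ = (-1 : K) ^ r := by simp
              · rw [if_neg hPQ]
                have hiex : ∃ i, P i ≠ Q i := by
                  by_contra h; push_neg at h; exact hPQ (funext h)
                obtain ⟨i, hi⟩ := hiex
                refine Finset.prod_eq_zero (Finset.mem_univ i) ?_
                rw [sum_Icc_zpow, if_neg (fun h => hi (by
                  have := mul_inv_eq_one.mp h; exact this))]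
          _ = e Q := by
              have hterm : ∀ P : Fin r → Kˣ,
                  (-1 : K) ^ r * e P * (if P = Q then (-1 : K) ^ r else 0)
                    = if P = Q then e P else 0 := by
                intro P
                split_ifs with h
                · calc (-1 : K) ^ r * e P * (-1 : K) ^ r
                      = e P * (((-1 : K) ^ r) * ((-1 : K) ^ r)) := by ring
                    _ = e P := by rw [hsq, mul_one]
                · rw [mul_zero]
              rw [Finset.sum_congr rfl fun P _ => hterm P,
                Finset.sum_ite_eq' Finset.univ Q e, if_pos (Finset.mem_univ Q)]
      exact key.symm
  · rintro ⟨g, hg, rfl⟩ f hf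
    have expand : ∀ P : Fin r → Kˣ, laurentEval g P * laurentEval f P
        = ∑ v ∈ g.support, ∑ u ∈ f.support,
            (g v * f u) * ∏ i, ((P i ^ (v i + u i) : Kˣ) : K) := by
      intro P
      unfold laurentEval
      rw [Finset.sum_mul_sum]
      refine Finset.sum_congr rfl fun v _ => Finset.sum_congr rfl fun u _ => ?_
      have hprod : ∏ i, ((P i ^ (v i + u i) : Kˣ) : K)
          = (∏ i, ((P i ^ v i : Kˣ) : K)) * ∏ i, ((P i ^ u i : Kˣ) : K) := by
        rw [← Finset.prod_mul_distrib]
        exact Finset.prod_congr rfl fun i _ => by rw [← Units.val_mul, zpow_add]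
      rw [hprod]; ring
    have main : ∑ P : Fin r → Kˣ, laurentEval g P * laurentEval f P
        = ∑ v ∈ g.support, ∑ u ∈ f.support, (g v * f u) *
            ∑ P : Fin r → Kˣ, ∏ i, ((P i ^ (v i + u i) : Kˣ) : K) := by
      simp only [expand]
      rw [Finset.sum_comm]
      refine Finset.sum_congr rfl fun v _ => ?_
      rw [Finset.sum_comm]
      exact Finset.sum_congr rfl fun u _ => (Finset.mul_sum _ _ _).symm
    show ∑ P : Fin r → Kˣ, laurentEval g P * laurentEval f P = 0
    rw [main]
    refine Finset.sum_eq_zero fun v hv => Finset.sum_eq_zero fun u hu => ?_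
    rw [char_sum, if_neg, mul_zero]
    intro hall
    obtain ⟨m, ⟨hmH, hmU⟩, hvm⟩ := hg (Finset.mem_coe.mpr hv)
    have huU : u ∈ U := hf (Finset.mem_coe.mpr hu)
    have huH : u ∈ Hset (Fintype.card K) r := hU huU
    have hum : u = m := by
      funext i
      have hd := hall i
      rw [← hvm] at hd
      have hd' : ((Fintype.card K : ℤ) - 1) ∣ u i - m i := by
        have hv2 : ((fun m : Fin r → ℤ => -m) m) i + u i = u i - m i := by
          simp [sub_eq_neg_add]
        rwa [hv2] at hd
      exact eq_of_dvd_sub h2 (huH i).1 (huH i).2 (hmH i).1 (hmH i).2 hd'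
    exact hmU (hum ▸ huU)
end

section
/- (Strong multiplication for toric secret sharing schemes.) Let U ⊆ ℤ^r be a finite subset, let U+U = {u_1 + u_2 : u_1, u_2 ∈ U} be the Minkowski sum, set n = (q−1)^r − 1, and let t be a natural number. Assume that every h ∈ 𝔽_q<U+U> which vanishes at at least n − t points of the torus (𝔽_q^*)^r vanishes at every point of (𝔽_q^*)^r. Fix P_0 ∈ (𝔽_q^*)^r, let A ⊆ (𝔽_q^*)^r ∖ {P_0} with |A| ≤ t, and set B = (𝔽_q^*)^r ∖ ({P_0} ∪ A). Then for all f, g, f', g' ∈ 𝔽_q<U> with f(P)·g(P) = f'(P)·g'(P) for every P ∈ B, one has f(P_0)·g(P_0) = f'(P_0)·g'(P_0); i.e., after removing any t shares, the products of the remaining shares determine the product of the secrets. -/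
open scoped BigOperators

/-- The monoid hom `Multiplicative (ℤ^r) →* K` given by evaluation of monomials at `P`. -/
noncomputable def torusHom {K : Type} [Field K] {r : ℕ} (P : Fin r → Kˣ) :
    Multiplicative (Fin r → ℤ) →* K where
  toFun u := ∏ i, ((P i ^ (Multiplicative.toAdd u) i : Kˣ) : K)
  map_one' := by simp
  map_mul' u v := by
    have : ∀ i ∈ Finset.univ, ((P i ^ (Multiplicative.toAdd (u * v)) i : Kˣ) : K)
        = ((P i ^ (Multiplicative.toAdd u) i : Kˣ) : K)
          * ((P i ^ (Multiplicative.toAdd v) i : Kˣ) : K) := by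
      intro i _
      have huv : Multiplicative.toAdd (u * v) i
          = Multiplicative.toAdd u i + Multiplicative.toAdd v i := rfl
      rw [huv, zpow_add, Units.val_mul]
    rw [Finset.prod_congr rfl this, Finset.prod_mul_distrib]

theorem laurentEval_eq {K : Type} [Field K] {r : ℕ}
    (f : AddMonoidAlgebra K (Fin r → ℤ)) (P : Fin r → Kˣ) :
    laurentEval f.coeff P = AddMonoidAlgebra.lift K K (Fin r → ℤ) (torusHom P) f := by
  rw [AddMonoidAlgebra.lift_apply]
  rfl

theorem laurentEval_mul {K : Type} [Field K] {r : ℕ}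
    (f g : AddMonoidAlgebra K (Fin r → ℤ)) (P : Fin r → Kˣ) :
    laurentEval (f * g).coeff P = laurentEval f.coeff P * laurentEval g.coeff P := by
  simp [laurentEval_eq, map_mul]

theorem laurentEval_sub {K : Type} [Field K] {r : ℕ}
    (f g : AddMonoidAlgebra K (Fin r → ℤ)) (P : Fin r → Kˣ) :
    laurentEval (f - g).coeff P = laurentEval f.coeff P - laurentEval g.coeff P := by
  rw [laurentEval_eq, laurentEval_eq, laurentEval_eq, map_sub]

/-- strong multiplication: with `n = (q−1)^r − 1`, if every
`h ∈ 𝔽_q<U+U>` vanishing at at least `n − t` torus points vanishes everywhere,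
then after removing any `t` shares, the products of the remaining shares
determine the product of the secrets. -/
theorem stmt9 {K : Type} [Field K] [Fintype K]
    (q : ℕ) (hq : Fintype.card K = q) {r : ℕ}
    (U : Set (Fin r → ℤ)) (hUfin : U.Finite) (t : ℕ)
    (hmult : ∀ h : (Fin r → ℤ) →₀ K,
      ↑h.support ⊆ {w : Fin r → ℤ | ∃ u₁ ∈ U, ∃ u₂ ∈ U, w = u₁ + u₂} →
      (((q : ℤ) - 1) ^ r - 1) - t ≤
        (Nat.card {P : Fin r → Kˣ | laurentEval h P = 0} : ℤ) →
      ∀ P : Fin r → Kˣ, laurentEval h P = 0)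
    (P₀ : Fin r → Kˣ) (A : Finset (Fin r → Kˣ)) (hP₀ : P₀ ∉ A) (hA : A.card ≤ t)
    (f g f' g' : (Fin r → ℤ) →₀ K)
    (hf : ↑f.support ⊆ U) (hg : ↑g.support ⊆ U)
    (hf' : ↑f'.support ⊆ U) (hg' : ↑g'.support ⊆ U)
    (hprod : ∀ P : Fin r → Kˣ, P ≠ P₀ → P ∉ A →
      laurentEval f P * laurentEval g P = laurentEval f' P * laurentEval g' P) :
    laurentEval f P₀ * laurentEval g P₀ = laurentEval f' P₀ * laurentEval g' P₀ := by
  set F : AddMonoidAlgebra K (Fin r → ℤ) := AddMonoidAlgebra.ofCoeff f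
  set G : AddMonoidAlgebra K (Fin r → ℤ) := AddMonoidAlgebra.ofCoeff g
  set F' : AddMonoidAlgebra K (Fin r → ℤ) := AddMonoidAlgebra.ofCoeff f'
  set G' : AddMonoidAlgebra K (Fin r → ℤ) := AddMonoidAlgebra.ofCoeff g'
  set h : AddMonoidAlgebra K (Fin r → ℤ) := F * G - F' * G' with hh
  have heval : ∀ P : Fin r → Kˣ,
      laurentEval h.coeff P = laurentEval f P * laurentEval g P
        - laurentEval f' P * laurentEval g' P := by
    intro P
    rw [hh, laurentEval_sub, laurentEval_mul, laurentEval_mul]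
  -- support condition
  have hsupp : ↑h.coeff.support ⊆ {w : Fin r → ℤ | ∃ u₁ ∈ U, ∃ u₂ ∈ U, w = u₁ + u₂} := by
    intro w hw
    have hw' : w ∈ (F * G).coeff.support ∪ (F' * G').coeff.support := by
      have := Finsupp.support_sub (f := (F * G).coeff) (g := (F' * G').coeff) (x := w)
      exact this hw
    have key : ∀ (a b : AddMonoidAlgebra K (Fin r → ℤ)),
        ↑a.coeff.support ⊆ U → ↑b.coeff.support ⊆ U → w ∈ (a * b).coeff.support →
        w ∈ {w : Fin r → ℤ | ∃ u₁ ∈ U, ∃ u₂ ∈ U, w = u₁ + u₂} := by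
      intro a b ha hb hw
      have := AddMonoidAlgebra.support_coeff_mul_subset a b hw
      rw [Finset.mem_add] at this
      obtain ⟨u₁, hu₁, u₂, hu₂, rfl⟩ := this
      exact ⟨u₁, ha hu₁, u₂, hb hu₂, rfl⟩
    rcases Finset.mem_union.mp hw' with h1 | h2
    · exact key F G hf hg h1
    · exact key F' G' hf' hg' h2
  -- cardinality condition
  have hq1 : 1 ≤ q := by
    rw [← hq]; exact Fintype.card_pos
  classical
  have hcard : (((q : ℤ) - 1) ^ r - 1) - t ≤
      (Nat.card {P : Fin r → Kˣ | laurentEval h.coeff P = 0} : ℤ) := by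
    set S : Set (Fin r → Kˣ) := {P | laurentEval h.coeff P = 0} with hS
    have hScompl : Sᶜ ⊆ (insert P₀ A : Finset (Fin r → Kˣ)) := by
      intro P hP
      by_contra hPmem
      simp only [Finset.coe_insert, Set.mem_insert_iff, Finset.mem_coe, not_or] at hPmem
      exact hP (by
        show laurentEval h.coeff P = 0
        rw [heval, hprod P hPmem.1 hPmem.2, sub_self])
    have hcompl_le : Nat.card ↥Sᶜ ≤ 1 + t := by
      have h1 : Sᶜ.ncard ≤ ((insert P₀ A : Finset (Fin r → Kˣ)) : Set (Fin r → Kˣ)).ncard :=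
        Set.ncard_le_ncard hScompl (Set.toFinite _)
      rw [Set.ncard_coe_finset, Finset.card_insert_of_notMem hP₀] at h1
      rw [Nat.card_coe_set_eq]
      omega
    have htotal : Nat.card S + Nat.card ↥Sᶜ = (q - 1) ^ r := by
      have h1 : Nat.card S + Nat.card ↥Sᶜ = Fintype.card (Fin r → Kˣ) := by
        rw [Nat.card_eq_fintype_card, Nat.card_eq_fintype_card]
        rw [Fintype.card_compl_set]
        have : Fintype.card S ≤ Fintype.card (Fin r → Kˣ) :=
          Fintype.card_subtype_le _
        omega
      rw [h1, Fintype.card_fun, Fintype.card_units, hq, Fintype.card_fin]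
    have hcast : ((q : ℤ) - 1) ^ r = ((q - 1 : ℕ) : ℤ) ^ r := by
      rw [Nat.cast_sub hq1]; norm_num
    rw [hcast]
    have := congrArg (Nat.cast : ℕ → ℤ) htotal
    push_cast at this ⊢
    have h2 : (Nat.card ↥Sᶜ : ℤ) ≤ 1 + t := by exact_mod_cast hcompl_le
    linarith
  have hzero := hmult h.coeff hsupp hcard P₀
  rw [heval] at hzero
  exact sub_eq_zero.mp hzero
end

section
/- (Maximal number of zeros on a Hirzebruch surface.) Let d, e, r be positive integers with d ≤ q−2, e ≤ q−2 and e + r·d ≤ q−2, and let U = {(i,j) ∈ ℤ² : 0 ≤ i ≤ d, 0 ≤ j ≤ e + r·i} be the lattice points of the polytope with vertices (0,0), (d,0), (d,e+rd), (0,e). Then the maximum, over all nonzero f ∈ 𝔽_q<U>, of the number of points P ∈ (𝔽_q^*)² with f(P) = 0 equals max{ d(q−1) + (q−1−d)e , (q−1)(e+dr) }. -/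
open scoped BigOperators

section helpers
open Polynomial

lemma laurentEval_eq_sum {K : Type} [Field K] {r : ℕ}
    (f : (Fin r → ℤ) →₀ K) (P : Fin r → Kˣ) :
    laurentEval f P = f.sum (fun u c => c * ∏ i, ((P i ^ u i : Kˣ) : K)) := rfl

lemma laurentEval_finset_sum {K : Type} [Field K] {r : ℕ} {ι : Type*} (s : Finset ι)
    (v : ι → (Fin r → ℤ)) (c : ι → K) (P : Fin r → Kˣ) :
    laurentEval (∑ j ∈ s, Finsupp.single (v j) (c j)) P
      = ∑ j ∈ s, c j * ∏ i, ((P i ^ (v j) i : Kˣ) : K) := by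
  rw [laurentEval_eq_sum, ← Finsupp.sum_finset_sum_index]
  · refine Finset.sum_congr rfl fun j _ => ?_
    rw [Finsupp.sum_single_index]
    simp
  · intro u; simp
  · intro u a b; ring

lemma prod_fin_two_pow {K : Type} [Field K] (P : Fin 2 → Kˣ) (m n : ℕ) :
    (∏ i, ((P i ^ (![(m:ℤ), (n:ℤ)]) i : Kˣ) : K)) = (P 0 : K) ^ m * (P 1 : K) ^ n := by
  rw [Fin.prod_univ_two]
  simp [zpow_natCast]

lemma card_fiber {K : Type} [Field K] [Fintype K] [DecidableEq K] (S : Finset Kˣ) :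
    Nat.card {P : Fin 2 → Kˣ | P 1 ∈ S} = Fintype.card Kˣ * S.card := by
  have e : ↑{P : Fin 2 → Kˣ | P 1 ∈ S} ≃ Kˣ × {x : Kˣ // x ∈ S} :=
    { toFun := fun P => (P.1 0, ⟨P.1 1, P.2⟩)
      invFun := fun x => ⟨![x.1, x.2.1], by simp⟩
      left_inv := by
        rintro ⟨P, hP⟩
        ext i
        fin_cases i <;> simp
      right_inv := by rintro ⟨x, y, hy⟩; simp }
  rw [Nat.card_congr e]
  simp [Nat.card_eq_fintype_card, Fintype.card_coe]

lemma membership {K : Type} [Field K] [Fintype K] [DecidableEq K]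
    (q : ℕ) (hq : Fintype.card K = q)
    (d e r : ℕ) (hedr : e + r * d ≤ q - 2) (hq3 : 3 ≤ q) :
    ∃ f : (Fin 2 → ℤ) →₀ K, (↑f.support ⊆ {u : Fin 2 → ℤ | 0 ≤ u 0 ∧ u 0 ≤ (d : ℤ) ∧ 0 ≤ u 1 ∧
        u 1 ≤ (e : ℤ) + (r : ℤ) * u 0}) ∧ f ≠ 0 ∧
      (q - 1) * (e + d * r) = Nat.card {P : Fin 2 → Kˣ | laurentEval f P = 0} := by
  set n := e + r * d with hn
  have hcardU : Fintype.card Kˣ = q - 1 := by rw [Fintype.card_units, hq]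
  have hnle : n ≤ Fintype.card Kˣ := by omega
  obtain ⟨S, -, hS⟩ := Finset.exists_subset_card_eq (s := (Finset.univ : Finset Kˣ)) (by simpa)
  set g : Polynomial K := ∏ s ∈ S, (X - C (s : K)) with hg
  have hgm : g.Monic := monic_prod_of_monic _ _ fun s _ => monic_X_sub_C _
  have hgdeg : g.natDegree = n := by
    rw [hg, natDegree_prod_of_monic _ _ fun s _ => monic_X_sub_C _]
    simp [hS]
  have hgroot : ∀ x : Kˣ, g.eval (x : K) = 0 ↔ x ∈ S := by
    intro x
    rw [hg, eval_prod, Finset.prod_eq_zero_iff]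
    constructor
    · rintro ⟨s, hs, h⟩
      simp only [eval_sub, eval_X, eval_C, sub_eq_zero] at h
      rwa [show x = s from Units.ext h]
    · intro hx; exact ⟨x, hx, by simp⟩
  set v : ℕ → (Fin 2 → ℤ) := fun j => ![(d : ℤ), (j : ℤ)] with hv
  set f : (Fin 2 → ℤ) →₀ K := ∑ j ∈ Finset.range (n+1), Finsupp.single (v j) (g.coeff j) with hf
  have heval : ∀ P : Fin 2 → Kˣ, laurentEval f P = (P 0 : K) ^ d * g.eval (P 1 : K) := by
    intro P
    rw [hf, laurentEval_finset_sum]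
    have : g.eval ((P 1 : Kˣ) : K) = ∑ j ∈ Finset.range (n+1), g.coeff j * (P 1 : K) ^ j := by
      rw [eval_eq_sum_range' (by omega : g.natDegree < n + 1)]
    rw [this, Finset.mul_sum]
    refine Finset.sum_congr rfl fun j _ => ?_
    rw [hv, prod_fin_two_pow]
    ring
  have hfne : f ≠ 0 := by
    intro h0
    have : f (v n) = 1 := by
      rw [hf, Finsupp.finset_sum_apply]
      rw [Finset.sum_eq_single n]
      · simp [Finsupp.single_apply, ← hgdeg, hgm.coeff_natDegree]
      · intro j hj hjn
        rw [Finsupp.single_apply, if_neg]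
        intro hvj
        apply hjn
        have h1 := congrFun hvj 1
        simp only [hv, Matrix.cons_val_one, Matrix.head_cons, Matrix.cons_val_zero] at h1
        exact_mod_cast h1
      · simp
    rw [h0] at this
    simp at this
  refine ⟨f, ?_, hfne, ?_⟩
  · intro u hu
    simp only [Finset.mem_coe] at hu
    have := Finsupp.support_finset_sum hu
    rw [Finset.mem_biUnion] at this
    obtain ⟨j, hj, hju⟩ := this
    have := Finsupp.support_single_subset hju
    simp only [Finset.mem_singleton] at this
    subst this
    simp only [Finset.mem_range] at hj
    refine ⟨by simp [hv], by simp [hv], by simp [hv], ?_⟩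
    simp only [hv, Matrix.cons_val_one, Matrix.head_cons, Matrix.cons_val_zero]
    push_cast
    have : (j : ℤ) ≤ n := by exact_mod_cast Nat.le_of_lt_succ hj
    rw [hn] at this
    push_cast at this
    linarith
  · have hset : {P : Fin 2 → Kˣ | laurentEval f P = 0} = {P : Fin 2 → Kˣ | P 1 ∈ S} := by
      ext P
      simp only [Set.mem_setOf_eq, heval P]
      rw [mul_eq_zero]
      constructor
      · rintro (h | h)
        · exact absurd h (pow_ne_zero _ (Units.ne_zero _))
        · exact (hgroot _).1 h
      · intro h; exact Or.inr ((hgroot _).2 h)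
    rw [hset, card_fiber, hS, hcardU, hn]
    ring

lemma fin2_ext {α : Type*} {u v : Fin 2 → α} (h0 : u 0 = v 0) (h1 : u 1 = v 1) : u = v := by
  funext i; fin_cases i <;> assumption

lemma upper_bound {K : Type} [Field K] [Fintype K] [DecidableEq K]
    (q : ℕ) (hq : Fintype.card K = q)
    (d e r : ℕ) (hr : 0 < r) (hq3 : 3 ≤ q)
    (f : (Fin 2 → ℤ) →₀ K)
    (hsupp : ↑f.support ⊆ {u : Fin 2 → ℤ | 0 ≤ u 0 ∧ u 0 ≤ (d : ℤ) ∧ 0 ≤ u 1 ∧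
        u 1 ≤ (e : ℤ) + (r : ℤ) * u 0})
    (hf : f ≠ 0) :
    Nat.card {P : Fin 2 → Kˣ | laurentEval f P = 0} ≤ (q - 1) * (e + d * r) := by
  classical
  have hcardU : Fintype.card Kˣ = q - 1 := by rw [Fintype.card_units, hq]
  have hmem : ∀ u ∈ f.support, 0 ≤ u 0 ∧ u 0 ≤ (d:ℤ) ∧ 0 ≤ u 1 ∧
      u 1 ≤ (e:ℤ) + (r:ℤ) * u 0 := fun u hu => hsupp hu
  -- the column polynomials c i (coefficients of X₁^i, as polynomials in X₂)
  set c : ℕ → Polynomial K := fun i =>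
    ∑ u ∈ f.support.filter (fun u => u 0 = (i:ℤ)), C (f u) * X ^ (u 1).toNat with hc
  have hcoeffA : ∀ u ∈ f.support, (c (u 0).toNat).coeff (u 1).toNat = f u := by
    intro u hu
    obtain ⟨h0, h1, h2, h3⟩ := hmem u hu
    rw [hc]
    rw [Polynomial.finset_sum_coeff]
    rw [Finset.sum_eq_single_of_mem u (by
      simp only [Finset.mem_filter]
      exact ⟨hu, by omega⟩)]
    · simp [coeff_C_mul, coeff_X_pow]
    · intro u' hu' hne
      simp only [Finset.mem_filter] at hu'
      obtain ⟨hu's, hu'0⟩ := hu'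
      obtain ⟨h0', h1', h2', h3'⟩ := hmem u' hu's
      rw [coeff_C_mul, coeff_X_pow, if_neg, mul_zero]
      intro hEq
      apply hne
      apply fin2_ext (by omega) (by omega)
  have hcne : ∀ u ∈ f.support, c (u 0).toNat ≠ 0 := by
    intro u hu h0
    have := hcoeffA u hu
    rw [h0] at this
    simp only [coeff_zero] at this
    exact (Finsupp.mem_support_iff.1 hu) this.symm
  have hex : ∃ i, c i ≠ 0 := by
    obtain ⟨u, hu⟩ := Finsupp.support_nonempty_iff.2 hf
    exact ⟨(u 0).toNat, hcne u hu⟩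
  set a := Nat.find hex with hadef
  have ha : c a ≠ 0 := Nat.find_spec hex
  have hge : ∀ u ∈ f.support, a ≤ (u 0).toNat := fun u hu => Nat.find_min' hex (hcne u hu)
  have had : a ≤ d := by
    obtain ⟨u, hu⟩ := Finsupp.support_nonempty_iff.2 hf
    have := hge u hu
    have h1 := (hmem u hu).2.1
    omega
  clear_value a
  have hdeg_ca : (c a).natDegree ≤ e + r * a := by
    rw [hc]
    refine Polynomial.natDegree_sum_le_of_forall_le _ _ fun u hu => ?_
    simp only [Finset.mem_filter] at hu
    obtain ⟨hus, hu0⟩ := hu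
    obtain ⟨h0, h1, h2, h3⟩ := hmem u hus
    rw [hu0] at h3
    refine (Polynomial.natDegree_C_mul_X_pow_le _ _).trans ?_
    rw [Int.toNat_le]
    push_cast
    linarith
  -- bad columns: zeros of c a
  set B : Finset Kˣ := Finset.univ.filter (fun x => (c a).eval (x:K) = 0) with hB
  have hBcard : B.card ≤ e + r * a := by
    have hinj : Set.InjOn (fun x : Kˣ => (x : K)) B := fun x _ y _ h => Units.ext h
    have hmaps : ∀ x ∈ B, (x : K) ∈ (c a).roots.toFinset := by
      intro x hx
      simp only [hB, Finset.mem_filter] at hx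
      rw [Multiset.mem_toFinset, Polynomial.mem_roots']
      exact ⟨ha, hx.2⟩
    calc B.card ≤ (c a).roots.toFinset.card := Finset.card_le_card_of_injOn _ hmaps hinj
      _ ≤ Multiset.card (c a).roots := Multiset.toFinset_card_le _
      _ ≤ (c a).natDegree := Polynomial.card_roots' _
      _ ≤ e + r * a := hdeg_ca
  -- the column polynomial in X₁ for fixed x₂
  set pcol : Kˣ → Polynomial K := fun x₂ =>
    ∑ u ∈ f.support, C (f u * (x₂:K) ^ (u 1).toNat) * X ^ ((u 0).toNat - a) with hpcol
  have heval : ∀ P : Fin 2 → Kˣ,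
      laurentEval f P = (P 0 : K) ^ a * (pcol (P 1)).eval (P 0 : K) := by
    intro P
    rw [hpcol, laurentEval, Polynomial.eval_finset_sum, Finset.mul_sum]
    refine Finset.sum_congr rfl fun u hu => ?_
    obtain ⟨h0, h1, h2, h3⟩ := hmem u hu
    have hga := hge u hu
    rw [Fin.prod_univ_two]
    have e0 : ((P 0 ^ u 0 : Kˣ) : K) = (P 0 : K) ^ (u 0).toNat := by
      conv_lhs => rw [← Int.toNat_of_nonneg h0]
      rw [zpow_natCast, Units.val_pow_eq_pow_val]
    have e1 : ((P 1 ^ u 1 : Kˣ) : K) = (P 1 : K) ^ (u 1).toNat := by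
      conv_lhs => rw [← Int.toNat_of_nonneg h2]
      rw [zpow_natCast, Units.val_pow_eq_pow_val]
    rw [e0, e1]
    rw [eval_mul, eval_C, eval_pow, eval_X]
    have : (P 0 : K) ^ (u 0).toNat = (P 0 : K) ^ a * (P 0 : K) ^ ((u 0).toNat - a) := by
      rw [← pow_add, Nat.add_sub_cancel' hga]
    rw [this]; ring
  have hpdeg : ∀ x₂ : Kˣ, (pcol x₂).natDegree ≤ d - a := by
    intro x₂
    rw [hpcol]
    refine Polynomial.natDegree_sum_le_of_forall_le _ _ fun u hu => ?_
    obtain ⟨h0, h1, h2, h3⟩ := hmem u hu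
    refine (Polynomial.natDegree_C_mul_X_pow_le _ _).trans ?_
    omega
  have hpcoeff0 : ∀ x₂ : Kˣ, (pcol x₂).coeff 0 = (c a).eval (x₂ : K) := by
    intro x₂
    rw [hpcol, hc, Polynomial.finset_sum_coeff, Polynomial.eval_finset_sum,
      Finset.sum_filter]
    refine Finset.sum_congr rfl fun u hu => ?_
    obtain ⟨h0, h1, h2, h3⟩ := hmem u hu
    have hga := hge u hu
    rw [coeff_C_mul, coeff_X_pow]
    have hiff : (0 = (u 0).toNat - a) ↔ (u 0 = (a:ℤ)) := by omega
    by_cases hcase : u 0 = (a:ℤ)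
    · rw [if_pos (hiff.2 hcase), if_pos hcase]
      simp
    · rw [if_neg (fun h => hcase (hiff.1 h)), if_neg hcase, mul_zero]
  -- counting
  have hcount : Nat.card {P : Fin 2 → Kˣ | laurentEval f P = 0}
      = (Finset.univ.filter (fun P : Fin 2 → Kˣ => laurentEval f P = 0)).card := by
    rw [Nat.card_coe_set_eq, Set.ncard_eq_toFinset_card', Set.toFinset_setOf]
  rw [hcount]
  set Z := Finset.univ.filter (fun P : Fin 2 → Kˣ => laurentEval f P = 0) with hZ
  have hfiber : Z.card = ∑ x₂ : Kˣ, (Z.filter (fun P => P 1 = x₂)).card :=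
    Finset.card_eq_sum_card_fiberwise (fun P _ => Finset.mem_univ (P 1))
  have hbadbound : ∀ x₂ ∈ B, (Z.filter (fun P => P 1 = x₂)).card ≤ q - 1 := by
    intro x₂ _
    have : (Z.filter (fun P => P 1 = x₂)).card ≤ (Finset.univ : Finset Kˣ).card := by
      refine Finset.card_le_card_of_injOn (fun P => P 0) (fun P _ => Finset.mem_univ _) ?_
      intro P hP Q hQ h
      simp only [Finset.mem_coe, Finset.mem_filter] at hP hQ
      exact fin2_ext h (hP.2.trans hQ.2.symm)
    simpa [hcardU] using this
  have hgoodbound : ∀ x₂ ∈ Finset.univ \ B, (Z.filter (fun P => P 1 = x₂)).card ≤ d - a := by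
    intro x₂ hx₂
    simp only [Finset.mem_sdiff, hB, Finset.mem_filter, Finset.mem_univ, true_and] at hx₂
    have hpne : pcol x₂ ≠ 0 := by
      intro h0
      apply hx₂
      rw [← hpcoeff0 x₂, h0, coeff_zero]
    have hmaps : ∀ P ∈ Z.filter (fun P => P 1 = x₂),
        ((P 0 : Kˣ) : K) ∈ (pcol x₂).roots.toFinset := by
      intro P hP
      simp only [hZ, Finset.mem_filter, Finset.mem_univ, true_and] at hP
      obtain ⟨hPz, hP1⟩ := hP
      rw [Multiset.mem_toFinset, Polynomial.mem_roots']
      refine ⟨hpne, ?_⟩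
      rw [heval P, hP1] at hPz
      have hne : (P 0 : K) ^ a ≠ 0 := pow_ne_zero _ (Units.ne_zero _)
      exact (mul_eq_zero.1 hPz).resolve_left hne
    have hinj : Set.InjOn (fun P : Fin 2 → Kˣ => ((P 0 : Kˣ) : K))
        (Z.filter (fun P => P 1 = x₂)) := by
      intro P hP Q hQ h
      simp only [Finset.mem_coe, Finset.mem_filter] at hP hQ
      exact fin2_ext (Units.ext h) (hP.2.trans hQ.2.symm)
    calc (Z.filter (fun P => P 1 = x₂)).card
        ≤ (pcol x₂).roots.toFinset.card := Finset.card_le_card_of_injOn _ hmaps hinj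
      _ ≤ Multiset.card (pcol x₂).roots := Multiset.toFinset_card_le _
      _ ≤ (pcol x₂).natDegree := Polynomial.card_roots' _
      _ ≤ d - a := hpdeg x₂
  rw [hfiber, ← Finset.sum_sdiff (Finset.subset_univ B)]
  have h1 : ∑ x₂ ∈ Finset.univ \ B, (Z.filter (fun P => P 1 = x₂)).card
      ≤ (q - 1) * (d - a) := by
    calc ∑ x₂ ∈ Finset.univ \ B, (Z.filter (fun P => P 1 = x₂)).card
        ≤ (Finset.univ \ B).card * (d - a) := by
          simpa using Finset.sum_le_card_nsmul _ _ _ hgoodbound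
      _ ≤ (q - 1) * (d - a) := by
          refine Nat.mul_le_mul_right _ ?_
          calc (Finset.univ \ B).card ≤ (Finset.univ : Finset Kˣ).card :=
                Finset.card_le_card (Finset.sdiff_subset)
            _ = q - 1 := by simp [hcardU]
  have h2 : ∑ x₂ ∈ B, (Z.filter (fun P => P 1 = x₂)).card ≤ (e + r * a) * (q - 1) := by
    calc ∑ x₂ ∈ B, (Z.filter (fun P => P 1 = x₂)).card
        ≤ B.card * (q - 1) := by simpa using Finset.sum_le_card_nsmul _ _ _ hbadbound
      _ ≤ (e + r * a) * (q - 1) := Nat.mul_le_mul_right _ hBcard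
  refine (Nat.add_le_add h1 h2).trans ?_
  have key : (d - a) + (e + r * a) ≤ e + d * r := by
    obtain ⟨m, hm⟩ := Nat.exists_eq_add_of_le had
    rw [hm]
    have hma : a + m - a = m := Nat.add_sub_cancel_left a m
    rw [hma]
    nlinarith
  calc (q - 1) * (d - a) + (e + r * a) * (q - 1)
      = (q - 1) * ((d - a) + (e + r * a)) := by ring
    _ ≤ (q - 1) * (e + d * r) := Nat.mul_le_mul_left _ key

end helpers

/-- maximal number of zeros on a Hirzebruch surface: for `U` the
lattice points of the polytope with vertices `(0,0), (d,0), (d,e+rd), (0,e)`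
(with `d, e, e+rd ≤ q−2`), the maximum number of torus zeros of a nonzero
`f ∈ 𝔽_q<U>` equals `max{d(q−1) + (q−1−d)e, (q−1)(e+dr)}`. -/

theorem stmt11 {K : Type} [Field K] [Fintype K]
    (q : ℕ) (hq : Fintype.card K = q)
    (d e r : ℕ) (hd : 0 < d) (he : 0 < e) (hr : 0 < r)
    (hdq : d ≤ q - 2) (heq : e ≤ q - 2) (hedr : e + r * d ≤ q - 2)
    (U : Set (Fin 2 → ℤ))
    (hU : U = {u : Fin 2 → ℤ | 0 ≤ u 0 ∧ u 0 ≤ (d : ℤ) ∧ 0 ≤ u 1 ∧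
        u 1 ≤ (e : ℤ) + (r : ℤ) * u 0}) :
    IsGreatest
      {z : ℕ | ∃ f : (Fin 2 → ℤ) →₀ K, ↑f.support ⊆ U ∧ f ≠ 0 ∧
        z = Nat.card {P : Fin 2 → Kˣ | laurentEval f P = 0}}
      (max (d * (q - 1) + (q - 1 - d) * e) ((q - 1) * (e + d * r))) := by
  classical
  have hq3 : 3 ≤ q := by omega
  have hle : d * (q - 1) + (q - 1 - d) * e ≤ (q - 1) * (e + d * r) := by
    have h1 : (q - 1 - d) * e ≤ (q - 1) * e := Nat.mul_le_mul_right _ (Nat.sub_le _ _)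
    have h2 : d * (q - 1) ≤ (q - 1) * (d * r) := by
      rw [mul_comm]
      refine Nat.mul_le_mul_left _ ?_
      nlinarith
    calc d * (q - 1) + (q - 1 - d) * e ≤ (q - 1) * (d * r) + (q - 1) * e :=
          Nat.add_le_add h2 h1
      _ = (q - 1) * (e + d * r) := by ring
  rw [max_eq_right hle]
  constructor
  · obtain ⟨f, h1, h2, h3⟩ := membership q hq d e r hedr hq3
    exact ⟨f, by rw [hU]; exact h1, h2, h3⟩
  · rintro z ⟨f, hfs, hfne, rfl⟩
    rw [hU] at hfs
    exact upper_bound q hq d e r hr hq3 f hfs hfne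
end

section
/- Let a, b be integers with 0 ≤ b ≤ a ≤ q−2 and q ≥ 3, and let U = {(i,j) ∈ ℤ² : 0 ≤ j ≤ q−2, 0 ≤ i, and (q−2)·i ≤ a(q−2) + (b−a)·j} be the lattice points of the polytope with vertices (0,0), (a,0), (b,q−2), (0,q−2). Then every nonzero f ∈ 𝔽_q<U> vanishes at no more than (q−1)² − (q−1−a) points of the torus (𝔽_q^*)². -/
open scoped BigOperators

open Polynomial Finset in
lemma card_units_root_le {K : Type} [Field K] [Fintype K] [DecidableEq K]
    (h : Polynomial K) (hh : h ≠ 0) :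
    (Finset.univ.filter (fun y : Kˣ => h.eval (y:K) = 0)).card ≤ h.natDegree := by
  classical
  set s := Finset.univ.filter (fun y : Kˣ => h.eval (y:K) = 0) with hs
  have hinj : Set.InjOn (fun y : Kˣ => (y : K)) s := fun x _ y _ hxy => Units.ext hxy
  have h1 : s.card = (s.image (fun y : Kˣ => (y : K))).card :=
    (Finset.card_image_of_injOn hinj).symm
  have h2 : s.image (fun y : Kˣ => (y : K)) ⊆ h.roots.toFinset := by
    intro z hz
    simp only [Finset.mem_image] at hz
    obtain ⟨y, hy, rfl⟩ := hz
    simp only [hs, Finset.mem_filter] at hy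
    rw [Multiset.mem_toFinset, Polynomial.mem_roots']
    exact ⟨hh, hy.2⟩
  calc s.card = _ := h1
    _ ≤ h.roots.toFinset.card := Finset.card_le_card h2
    _ ≤ Multiset.card h.roots := h.roots.toFinset_card_le
    _ ≤ h.natDegree := h.card_roots'

open Polynomial Finset in
/-- for `U` the lattice points of the polytope with vertices
`(0,0), (a,0), (b,q−2), (0,q−2)` (`0 ≤ b ≤ a ≤ q−2`), every nonzero
`f ∈ 𝔽_q<U>` vanishes at no more than `(q−1)² − (q−1−a)` torus points. -/
theorem stmt12 {K : Type} [Field K] [Fintype K]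
    (q : ℕ) (hq : Fintype.card K = q) (hq3 : 3 ≤ q)
    (a b : ℤ) (hb : 0 ≤ b) (hba : b ≤ a) (ha : a ≤ (q : ℤ) - 2)
    (U : Set (Fin 2 → ℤ))
    (hU : U = {u : Fin 2 → ℤ | 0 ≤ u 1 ∧ u 1 ≤ (q : ℤ) - 2 ∧ 0 ≤ u 0 ∧
        ((q : ℤ) - 2) * u 0 ≤ a * ((q : ℤ) - 2) + (b - a) * u 1})
    (f : (Fin 2 → ℤ) →₀ K) (hf : ↑f.support ⊆ U) (hf0 : f ≠ 0) :
    (Nat.card {P : Fin 2 → Kˣ | laurentEval f P = 0} : ℤ) ≤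
      ((q : ℤ) - 1) ^ 2 - ((q : ℤ) - 1 - a) := by
  classical
  have hqz : (3 : ℤ) ≤ (q : ℤ) := by exact_mod_cast hq3
  have ha0 : 0 ≤ a := le_trans hb hba
  -- support bounds
  have hsupp : ∀ u ∈ f.support, 0 ≤ u 1 ∧ u 1 ≤ (q:ℤ) - 2 ∧ 0 ≤ u 0 ∧ u 0 ≤ a := by
    intro u hu
    have h := hf hu
    rw [hU] at h
    obtain ⟨h1, h2, h3, h4⟩ := h
    refine ⟨h1, h2, h3, ?_⟩
    nlinarith
  -- the one–variable polynomials
  set g : Kˣ → Polynomial K :=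
    fun y => ∑ u ∈ f.support, C (f u * (y:K) ^ (u 1).toNat) * X ^ (u 0).toNat with hg
  have hz : ∀ (x : Kˣ) (n : ℤ), 0 ≤ n → ((x ^ n : Kˣ) : K) = (x : K) ^ n.toNat := by
    intro x n hn
    lift n to ℕ using hn
    simp
  have hgeval : ∀ P : Fin 2 → Kˣ, laurentEval f P = (g (P 1)).eval ((P 0 : K)) := by
    intro P
    rw [hg, Polynomial.eval_finset_sum]
    unfold laurentEval
    refine Finset.sum_congr rfl fun u hu => ?_
    obtain ⟨h1, h2, h3, h4⟩ := hsupp u hu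
    rw [Fin.prod_univ_two, hz _ _ h3, hz _ _ h1]
    simp only [eval_mul, eval_C, eval_pow, eval_X]
    ring
  have hgdeg : ∀ y, (g y).natDegree ≤ a.toNat := by
    intro y
    apply Polynomial.natDegree_sum_le_of_forall_le
    intro u hu
    exact le_trans (Polynomial.natDegree_C_mul_le _ _)
      (le_trans (Polynomial.natDegree_X_pow_le _)
        (Int.toNat_le_toNat (hsupp u hu).2.2.2))
  have hgcoeff : ∀ (y : Kˣ) (n : ℕ), (g y).coeff n =
      ∑ u ∈ f.support.filter (fun u => (u 0).toNat = n), f u * (y:K) ^ (u 1).toNat := by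
    intro y n
    rw [hg, Polynomial.finset_sum_coeff, Finset.sum_filter]
    refine Finset.sum_congr rfl fun u hu => ?_
    rw [Polynomial.coeff_C_mul, Polynomial.coeff_X_pow]
    by_cases hc : (u 0).toNat = n
    · simp [hc]
    · simp [hc, Ne.symm hc]
  -- choose a nonzero coefficient
  obtain ⟨u₀, hu₀⟩ := Finsupp.support_nonempty_iff.mpr hf0
  have hfu₀ : f u₀ ≠ 0 := Finsupp.mem_support_iff.mp hu₀
  set h : Polynomial K :=
    ∑ u ∈ f.support.filter (fun u => u 0 = u₀ 0), C (f u) * X ^ (u 1).toNat with hh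
  have hhc : h.coeff (u₀ 1).toNat = f u₀ := by
    have hmem : u₀ ∈ f.support.filter (fun u => u 0 = u₀ 0) :=
      Finset.mem_filter.mpr ⟨hu₀, rfl⟩
    rw [hh, Polynomial.finset_sum_coeff, Finset.sum_eq_single_of_mem u₀ hmem]
    · simp
    · intro u hu hne
      simp only [Finset.mem_filter] at hu
      rw [Polynomial.coeff_C_mul, Polynomial.coeff_X_pow]
      have hne2 : (u 1).toNat ≠ (u₀ 1).toNat := by
        intro hcon
        apply hne
        have e1 : u 1 = u₀ 1 := by
          have := (hsupp u hu.1).1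
          have := (hsupp u₀ hu₀).1
          omega
        funext i
        fin_cases i
        · exact hu.2
        · exact e1
      simp [hne2, Ne.symm hne2]
  have hhne : h ≠ 0 := fun hcon => hfu₀ (by rw [← hhc, hcon, Polynomial.coeff_zero])
  have hhdeg : h.natDegree ≤ q - 2 := by
    rw [hh]
    apply Polynomial.natDegree_sum_le_of_forall_le
    intro u hu
    refine le_trans (Polynomial.natDegree_C_mul_le _ _)
      (le_trans (Polynomial.natDegree_X_pow_le _) ?_)
    have := (hsupp u (Finset.mem_filter.mp hu).1).2.1
    omega
  -- the bad set of y's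
  set S : Finset Kˣ := Finset.univ.filter (fun y : Kˣ => g y = 0) with hS
  have heS : ∀ y : Kˣ, g y = 0 → h.eval (y:K) = 0 := by
    intro y hy
    have hc0 : (g y).coeff (u₀ 0).toNat = 0 := by rw [hy, Polynomial.coeff_zero]
    rw [hgcoeff] at hc0
    have hfilter : f.support.filter (fun u => (u 0).toNat = (u₀ 0).toNat)
        = f.support.filter (fun u => u 0 = u₀ 0) := by
      apply Finset.filter_congr
      intro u hu
      have := (hsupp u hu).2.2.1
      have := (hsupp u₀ hu₀).2.2.1
      constructor <;> (intro hh'; omega)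
    rw [hfilter] at hc0
    rw [hh, Polynomial.eval_finset_sum]
    simpa only [eval_mul, eval_C, eval_pow, eval_X] using hc0
  have hScard : S.card ≤ q - 2 := by
    have hsub : S ⊆ Finset.univ.filter (fun y : Kˣ => h.eval (y:K) = 0) := by
      intro y hy
      simp only [hS, Finset.mem_filter, Finset.mem_univ, true_and] at hy ⊢
      exact heS y hy
    exact le_trans (Finset.card_le_card hsub) (le_trans (card_units_root_le h hhne) hhdeg)
  -- cardinality as a finset card
  have hcardU : Fintype.card Kˣ = q - 1 := by rw [Fintype.card_units, hq]
  have hNat : Nat.card {P : Fin 2 → Kˣ | laurentEval f P = 0}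
      = (Finset.univ.filter (fun P : Fin 2 → Kˣ => laurentEval f P = 0)).card := by
    rw [Nat.card_eq_fintype_card]
    convert Fintype.card_subtype (fun P : Fin 2 → Kˣ => laurentEval f P = 0) using 2
    rfl
  -- fiberwise decomposition
  set Zf := Finset.univ.filter (fun P : Fin 2 → Kˣ => laurentEval f P = 0) with hZf
  have hsplit : Zf.card = ∑ y : Kˣ, (Zf.filter (fun P => P 1 = y)).card :=
    Finset.card_eq_sum_card_fiberwise (fun P _ => Finset.mem_univ (P 1))
  have hfiber : ∀ y : Kˣ,
      ((Zf.filter (fun P => P 1 = y)).card : ℤ) ≤ if y ∈ S then (q:ℤ) - 1 else a := by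
    intro y
    split_ifs with hyS
    · have : (Zf.filter (fun P => P 1 = y)).card ≤ Fintype.card Kˣ := by
        apply Finset.card_le_card_of_injOn (fun P => P 0) (fun P _ => Finset.mem_univ _)
        intro P hP P' hP' hPP'
        simp only [Finset.mem_coe, Finset.mem_filter] at hP hP'
        funext i
        fin_cases i
        · exact hPP'
        · exact hP.2.trans hP'.2.symm
      rw [hcardU] at this
      have h1q : 1 ≤ q := le_trans (by norm_num) hq3
      calc ((Zf.filter (fun P => P 1 = y)).card : ℤ) ≤ ((q - 1 : ℕ) : ℤ) := by
            exact_mod_cast this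
        _ = (q : ℤ) - 1 := by rw [Nat.cast_sub h1q]; norm_num
    · have hgy : g y ≠ 0 := by
        simp only [hS, Finset.mem_filter, Finset.mem_univ, true_and] at hyS
        exact hyS
      have hle : (Zf.filter (fun P => P 1 = y)).card ≤
          (Finset.univ.filter (fun x : Kˣ => (g y).eval (x:K) = 0)).card := by
        apply Finset.card_le_card_of_injOn (fun P => P 0)
        · intro P hP
          simp only [hZf, Finset.mem_coe, Finset.mem_filter, Finset.mem_univ, true_and] at hP ⊢
          rw [← hP.2]
          rw [← hgeval P]
          exact hP.1
        · intro P hP P' hP' hPP'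
          simp only [Finset.mem_coe, Finset.mem_filter] at hP hP'
          funext i
          fin_cases i
          · exact hPP'
          · exact hP.2.trans hP'.2.symm
      have hle2 := le_trans hle (le_trans (card_units_root_le (g y) hgy) (hgdeg y))
      calc ((Zf.filter (fun P => P 1 = y)).card : ℤ) ≤ (a.toNat : ℤ) := by exact_mod_cast hle2
        _ = a := Int.toNat_of_nonneg ha0
  -- put everything together
  have hsum : (Zf.card : ℤ) ≤ ∑ y : Kˣ, (if y ∈ S then (q:ℤ) - 1 else a) := by
    rw [hsplit]
    push_cast
    exact Finset.sum_le_sum fun y _ => hfiber y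
  have hsum2 : ∑ y : Kˣ, (if y ∈ S then (q:ℤ) - 1 else a)
      = (S.card : ℤ) * ((q:ℤ) - 1) + ((Finset.univ.filter (fun y : Kˣ => y ∉ S)).card : ℤ) * a := by
    rw [Finset.sum_ite, Finset.sum_const, Finset.sum_const]
    simp [Finset.filter_mem_eq_inter, mul_comm]
  have hcompl : (Finset.univ.filter (fun y : Kˣ => y ∈ S)).card
      + (Finset.univ.filter (fun y : Kˣ => y ∉ S)).card = q - 1 := by
    rw [Finset.card_filter_add_card_filter_not, Finset.card_univ, hcardU]
  have hSS : (Finset.univ.filter (fun y : Kˣ => y ∈ S)).card = S.card := by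
    congr 1
    simp [Finset.filter_mem_eq_inter]
  rw [hNat]
  have hZle := le_trans hsum (le_of_eq hsum2)
  set cS := S.card
  set cN := (Finset.univ.filter (fun y : Kˣ => y ∉ S)).card
  rw [hSS] at hcompl
  have h2q : 2 ≤ q := le_trans (by norm_num) hq3
  have h1q : 1 ≤ q := le_trans (by norm_num) hq3
  have h1 : (cS : ℤ) ≤ (q:ℤ) - 2 := by
    have : ((q:ℤ) - 2) = ((q - 2 : ℕ) : ℤ) := by rw [Nat.cast_sub h2q]; norm_num
    rw [this]
    exact_mod_cast hScard
  have h2 : (cS : ℤ) + (cN : ℤ) = (q:ℤ) - 1 := by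
    have : ((q:ℤ) - 1) = ((q - 1 : ℕ) : ℤ) := by rw [Nat.cast_sub h1q]; norm_num
    rw [this]
    exact_mod_cast hcompl
  nlinarith [Nat.cast_nonneg (α := ℤ) cS, Nat.cast_nonneg (α := ℤ) cN]
end

section
/- Let a, b be integers with 0 ≤ b ≤ a ≤ q−2 and q ≥ 3, let U = {(i,j) ∈ ℤ² : 0 ≤ j ≤ q−2, 0 ≤ i, and (q−2)·i ≤ a(q−2) + (b−a)·j}, let H = {0,…,q−2}², and set −H∖−U = {−m : m ∈ H, m ∉ U}. Then every nonzero g ∈ 𝔽_q<−H∖−U> vanishes at no more than (q−1)² − 1 − b points of the torus (𝔽_q^*)². -/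
open scoped BigOperators

/-- Auxiliary: the number of unit roots of a nonzero polynomial is at most its degree. -/
lemma aux_roots_card {K : Type} [Field K] [Fintype K] [DecidableEq K]
    (p : Polynomial K) (hp : p ≠ 0) :
    (Finset.univ.filter (fun x : Kˣ => p.eval (x : K) = 0)).card ≤ p.natDegree := by
  classical
  have h1 : (Finset.univ.filter (fun x : Kˣ => p.eval (x : K) = 0)).card ≤
      p.roots.toFinset.card := by
    apply Finset.card_le_card_of_injOn (fun x : Kˣ => (x : K))
    · intro x hx
      simp only [Finset.mem_coe, Finset.mem_filter] at hx
      simp only [Finset.mem_coe, Multiset.mem_toFinset, Polynomial.mem_roots, hp,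
        ne_eq, not_false_iff, true_and, Polynomial.IsRoot.def]
      exact hx.2
    · intro x _ y _ h
      exact Units.ext h
  exact h1.trans ((Multiset.toFinset_card_le _).trans (Polynomial.card_roots' p))

/-- for `U` the lattice points of the polytope with vertices
`(0,0), (a,0), (b,q−2), (0,q−2)` (`0 ≤ b ≤ a ≤ q−2`) and `H = {0,…,q−2}²`,
every nonzero `g ∈ 𝔽_q<−H∖−U>` vanishes at no more than `(q−1)² − 1 − b`
torus points. -/
theorem stmt17 {K : Type} [Field K] [Fintype K]
    (q : ℕ) (hq : Fintype.card K = q) (hq3 : 3 ≤ q)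
    (a b : ℤ) (hb : 0 ≤ b) (hba : b ≤ a) (ha : a ≤ (q : ℤ) - 2)
    (U : Set (Fin 2 → ℤ))
    (hU : U = {u : Fin 2 → ℤ | 0 ≤ u 1 ∧ u 1 ≤ (q : ℤ) - 2 ∧ 0 ≤ u 0 ∧
        ((q : ℤ) - 2) * u 0 ≤ a * ((q : ℤ) - 2) + (b - a) * u 1})
    (g : (Fin 2 → ℤ) →₀ K)
    (hg : ↑g.support ⊆ (fun m => -m) '' (Hset q 2 \ U)) (hg0 : g ≠ 0) :
    (Nat.card {P : Fin 2 → Kˣ | laurentEval g P = 0} : ℤ) ≤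
      ((q : ℤ) - 1) ^ 2 - 1 - b := by
  classical
  have hqz : (3 : ℤ) ≤ (q : ℤ) := by exact_mod_cast hq3
  -- bounds on the support
  have hsupp : ∀ e ∈ g.support,
      (-((q:ℤ) - 2) ≤ e 0 ∧ e 0 ≤ -(b+1)) ∧ (-((q:ℤ) - 2) ≤ e 1 ∧ e 1 ≤ 0) := by
    intro e he
    obtain ⟨m, hm, hme⟩ := hg (Finset.mem_coe.mpr he)
    obtain ⟨hmH, hmU⟩ := hm
    have h0 := hmH 0
    have h1 := hmH 1
    rw [hU] at hmU
    simp only [Set.mem_setOf_eq, not_and, not_le] at hmU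
    have hstrict : a * ((q:ℤ)-2) + (b-a) * m 1 < ((q:ℤ)-2) * m 0 :=
      hmU h1.1 h1.2 h0.1
    have hb1 : b + 1 ≤ m 0 := by
      by_contra hc
      push_neg at hc
      have hm0b : m 0 ≤ b := by omega
      nlinarith [mul_le_mul_of_nonneg_left hm0b (by linarith : (0:ℤ) ≤ (q:ℤ)-2),
        mul_le_mul_of_nonneg_left h1.2 (by linarith : (0:ℤ) ≤ a - b)]
    have he0 : e 0 = -(m 0) := by rw [← hme]; simp
    have he1 : e 1 = -(m 1) := by rw [← hme]; simp
    exact ⟨⟨by omega, by omega⟩, ⟨by omega, by omega⟩⟩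
  obtain ⟨es, hes⟩ := Finsupp.support_nonempty_iff.mpr hg0
  obtain ⟨⟨hes0l, hes0r⟩, hes1l, hes1r⟩ := hsupp es hes
  have hbq : b ≤ (q:ℤ) - 3 := by omega
  -- key power identity
  have key : ∀ (y : Kˣ) (t : ℤ), 0 ≤ t + ((q:ℤ)-2) →
      ((y : K)) ^ ((t + ((q:ℤ)-2)).toNat) =
        ((y ^ t : Kˣ) : K) * ((y ^ ((q:ℤ)-2) : Kˣ) : K) := by
    intro y t ht
    have h1 : (y ^ t * y ^ ((q:ℤ)-2) : Kˣ) = y ^ ((t + ((q:ℤ)-2)).toNat) := by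
      rw [← zpow_add, ← zpow_natCast y ((t + ((q:ℤ)-2)).toNat), Int.toNat_of_nonneg ht]
    rw [← Units.val_mul, h1, Units.val_pow_eq_pow_val]
  -- the polynomial R in the second variable
  set R : Polynomial K :=
    ∑ e ∈ g.support.filter (fun e => e 0 = es 0),
      Polynomial.C (g e) * Polynomial.X ^ (e 1 + ((q:ℤ)-2)).toNat with hR
  have hRcoeff : R.coeff ((es 1 + ((q:ℤ)-2)).toNat) = g es := by
    rw [hR, Polynomial.finset_sum_coeff, Finset.sum_eq_single es]
    · simp [Polynomial.coeff_C_mul, Polynomial.coeff_X_pow]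
    · intro e heF hne
      obtain ⟨heS, he0⟩ := Finset.mem_filter.mp heF
      obtain ⟨_, hl, hr⟩ := hsupp e heS
      have hne1 : e 1 ≠ es 1 := by
        intro h
        apply hne
        funext i
        fin_cases i
        · exact he0
        · exact h
      have hneq : ¬ ((es 1 + ((q:ℤ)-2)).toNat = (e 1 + ((q:ℤ)-2)).toNat) := by omega
      rw [Polynomial.coeff_C_mul, Polynomial.coeff_X_pow, if_neg hneq, mul_zero]
    · intro h
      have hmem : es ∈ g.support.filter (fun e => e 0 = es 0) :=
        Finset.mem_filter.mpr ⟨hes, rfl⟩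
      exact absurd hmem h
  have hRne : R ≠ 0 := by
    intro h
    rw [h, Polynomial.coeff_zero] at hRcoeff
    exact (Finsupp.mem_support_iff.mp hes) hRcoeff.symm
  have hRdeg : R.natDegree ≤ q - 2 := by
    apply Polynomial.natDegree_sum_le_of_forall_le
    intro e heF
    obtain ⟨heS, _⟩ := Finset.mem_filter.mp heF
    obtain ⟨_, hl, hr⟩ := hsupp e heS
    refine (Polynomial.natDegree_C_mul_X_pow_le _ _).trans ?_
    omega
  have hcard : Fintype.card Kˣ = q - 1 := by
    rw [Fintype.card_units, hq]
  -- find y0 with R(y0) ≠ 0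
  have hy0ex : ∃ y : Kˣ, R.eval (y : K) ≠ 0 := by
    by_contra hc
    push_neg at hc
    have h1 := aux_roots_card R hRne
    have h2 : (Finset.univ.filter (fun y : Kˣ => R.eval (y:K) = 0)) = Finset.univ :=
      Finset.filter_true_of_mem (fun y _ => hc y)
    rw [h2, Finset.card_univ, hcard] at h1
    omega
  obtain ⟨y0, hy0⟩ := hy0ex
  -- the polynomial Q in the first variable
  set Q : Polynomial K :=
    ∑ e ∈ g.support,
      Polynomial.C (g e * ((y0 ^ e 1 : Kˣ) : K)) * Polynomial.X ^ (e 0 + ((q:ℤ)-2)).toNat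
    with hQdef
  have hQdeg : Q.natDegree ≤ ((q:ℤ) - 3 - b).toNat := by
    apply Polynomial.natDegree_sum_le_of_forall_le
    intro e heS
    obtain ⟨⟨hl, hr⟩, _⟩ := hsupp e heS
    refine (Polynomial.natDegree_C_mul_X_pow_le _ _).trans ?_
    omega
  have hQcoeff : Q.coeff ((es 0 + ((q:ℤ)-2)).toNat) * ((y0 ^ ((q:ℤ)-2) : Kˣ) : K)
      = R.eval (y0 : K) := by
    rw [hQdef, Polynomial.finset_sum_coeff, Finset.sum_mul, hR, Polynomial.eval_finset_sum,
      Finset.sum_filter]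
    apply Finset.sum_congr rfl
    intro e he
    obtain ⟨⟨h0l, h0r⟩, h1l, h1r⟩ := hsupp e he
    rw [Polynomial.coeff_C_mul, Polynomial.coeff_X_pow]
    by_cases hcase : e 0 = es 0
    · rw [if_pos (show (es 0 + ((q:ℤ)-2)).toNat = (e 0 + ((q:ℤ)-2)).toNat by omega),
        if_pos hcase]
      simp only [Polynomial.eval_mul, Polynomial.eval_C, Polynomial.eval_pow,
        Polynomial.eval_X]
      rw [key y0 (e 1) (by omega)]
      ring
    · rw [if_neg (show ¬ ((es 0 + ((q:ℤ)-2)).toNat = (e 0 + ((q:ℤ)-2)).toNat) by omega),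
        if_neg hcase]
      ring
  have hQne : Q ≠ 0 := by
    intro h
    rw [h, Polynomial.coeff_zero, zero_mul] at hQcoeff
    exact hy0 hQcoeff.symm
  -- relation between Q and laurentEval
  have heval : ∀ x : Kˣ, Q.eval (x : K) =
      ((x ^ ((q:ℤ)-2) : Kˣ) : K) * laurentEval g ![x, y0] := by
    intro x
    rw [hQdef, Polynomial.eval_finset_sum]
    unfold laurentEval
    rw [Finset.mul_sum]
    apply Finset.sum_congr rfl
    intro e he
    obtain ⟨⟨h0l, h0r⟩, _⟩ := hsupp e he
    simp only [Polynomial.eval_mul, Polynomial.eval_C, Polynomial.eval_pow, Polynomial.eval_X]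
    rw [key x (e 0) (by omega), Fin.prod_univ_two]
    simp only [Matrix.cons_val_zero, Matrix.cons_val_one, Matrix.head_cons]
    ring
  -- counting
  set Zx := Finset.univ.filter (fun x : Kˣ => laurentEval g ![x, y0] = 0) with hZx
  set Gx := Finset.univ.filter (fun x : Kˣ => ¬ (laurentEval g ![x, y0] = 0)) with hGx
  have hZcard : Zx.card ≤ ((q:ℤ) - 3 - b).toNat := by
    have hsub : Zx ⊆ Finset.univ.filter (fun x : Kˣ => Q.eval (x:K) = 0) := by
      intro x hx
      simp only [hZx, Finset.mem_filter] at hx ⊢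
      exact ⟨Finset.mem_univ x, by rw [heval x, hx.2, mul_zero]⟩
    exact (Finset.card_le_card hsub).trans ((aux_roots_card Q hQne).trans hQdeg)
  have hZG : Zx.card + Gx.card = q - 1 := by
    rw [hZx, hGx, Finset.card_filter_add_card_filter_not, Finset.card_univ, hcard]
  set T := Finset.univ.filter (fun P : Fin 2 → Kˣ => laurentEval g P = 0) with hT
  have hinj : Function.Injective (fun x : Kˣ => (![x, y0] : Fin 2 → Kˣ)) := by
    intro x y h
    have := congrFun h 0
    simpa using this
  have hdisj : Disjoint T (Gx.image (fun x : Kˣ => (![x, y0] : Fin 2 → Kˣ))) := by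
    rw [Finset.disjoint_left]
    intro P hP hP2
    simp only [hT, Finset.mem_filter] at hP
    simp only [Finset.mem_image, hGx, Finset.mem_filter] at hP2
    obtain ⟨x, hx, rfl⟩ := hP2
    exact hx.2 hP.2
  have hTG : T.card + Gx.card ≤ (q - 1) ^ 2 := by
    have h1 : (T ∪ Gx.image (fun x : Kˣ => (![x, y0] : Fin 2 → Kˣ))).card ≤
        Fintype.card (Fin 2 → Kˣ) := by
      rw [← Finset.card_univ]
      exact Finset.card_le_card (Finset.subset_univ _)
    rw [Finset.card_union_of_disjoint hdisj,
      Finset.card_image_of_injective _ hinj] at h1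
    rwa [Fintype.card_fun, hcard, Fintype.card_fin] at h1
  have hNat : Nat.card {P : Fin 2 → Kˣ | laurentEval g P = 0} = T.card := by
    rw [Nat.card_eq_fintype_card, hT]
    rw [Fintype.card_subtype]
    congr 1
  -- final arithmetic
  rw [hNat]
  have hc1 : (((q - 1 : ℕ)) ^ 2 : ℤ) = ((q:ℤ) - 1) ^ 2 := by
    have h1 : (1:ℕ) ≤ q := by omega
    push_cast [Nat.cast_sub h1]
    ring
  have hc2 : (((q - 1 : ℕ)) : ℤ) = (q:ℤ) - 1 := by
    have h1 : (1:ℕ) ≤ q := by omega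
    push_cast [Nat.cast_sub h1]
    ring
  have hc3 : ((((q:ℤ) - 3 - b).toNat : ℤ)) = (q:ℤ) - 3 - b := Int.toNat_of_nonneg (by omega)
  have i1 : (T.card : ℤ) + Gx.card ≤ ((q:ℤ) - 1) ^ 2 := by
    have := hTG
    zify at this
    rw [hc1] at this
    exact_mod_cast this
  have i2 : (Zx.card : ℤ) + Gx.card = (q:ℤ) - 1 := by
    have := hZG
    zify at this
    rw [hc2] at this
    exact_mod_cast this
  have i3 : (Zx.card : ℤ) ≤ (q:ℤ) - 3 - b := by
    have := hZcard
    zify at this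
    rw [hc3] at this
    exact this
  linarith
end
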